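/- Let p : ℝ → ℝ be a polynomial of degree at most r with p(0) = 0 and |p(i)| ≤ 2 for all integers i = 1, …, N, where r ≤ N. Then for every real ℓ ≥ N, |p(ℓ)| ≤ 4 ℓ^r. -/
import Mathlib

open Finset Polynomial

lemma aux_prod_fact (r i : ℕ) (hi : i ≤ r) :
    ∏ j ∈ (Finset.range (r+1)).erase i, |(i:ℝ) - j| =
      (Nat.factorial i : ℝ) * (Nat.factorial (r - i) : ℝ) := by
  have hset : (Finset.range (r+1)).erase i = Finset.range i ∪ Finset.Ico (i+1) (r+1) := by
    ext j
    simp only [mem_erase, mem_range, mem_union, mem_Ico]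
    omega
  have hdisj : Disjoint (Finset.range i) (Finset.Ico (i+1) (r+1)) := by
    rw [Finset.disjoint_left]
    intro j hj hj'
    simp only [mem_range] at hj
    simp only [mem_Ico] at hj'
    omega
  rw [hset, Finset.prod_union hdisj]
  congr 1
  · have : ∀ j ∈ Finset.range i, |(i:ℝ) - j| = ((i - j : ℕ) : ℝ) := by
      intro j hj
      simp only [mem_range] at hj
      rw [Nat.cast_sub hj.le, abs_of_nonneg]
      have : (j:ℝ) < i := by exact_mod_cast hj
      linarith
    rw [Finset.prod_congr rfl this, ← Nat.cast_prod]
    norm_cast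
    rw [← Finset.prod_range_reflect]
    have : ∀ j ∈ Finset.range i, i - (i - 1 - j) = j + 1 := by
      intro j hj; simp only [mem_range] at hj; omega
    rw [Finset.prod_congr rfl this, Finset.prod_range_add_one_eq_factorial]
  · rw [Finset.prod_Ico_eq_prod_range]
    have : ∀ j ∈ Finset.range (r + 1 - (i+1)), |(i:ℝ) - ((i + 1 + j : ℕ):ℝ)| = ((j + 1 : ℕ) : ℝ) := by
      intro j hj
      have h1 : (i:ℝ) - ((i + 1 + j : ℕ):ℝ) = -((j:ℝ)+1) := by push_cast; ring
      rw [h1, abs_neg, abs_of_nonneg (by positivity)]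
      push_cast; ring
    rw [Finset.prod_congr rfl this, ← Nat.cast_prod]
    norm_cast
    rw [Finset.prod_range_add_one_eq_factorial]
    congr 1
    omega

lemma aux_two_pow (r : ℕ) : 2 ^ r ≤ 2 * Nat.factorial r := by
  induction r with
  | zero => norm_num
  | succ n ih =>
    rcases Nat.eq_zero_or_pos n with h | h
    · subst h; norm_num
    · calc 2 ^ (n+1) = 2 * 2 ^ n := by ring
        _ ≤ 2 * (2 * n.factorial) := by omega
        _ ≤ 2 * ((n+1) * n.factorial) := by
            have : 2 ≤ n + 1 := by omega
            exact Nat.mul_le_mul_left _ (Nat.mul_le_mul_right _ this)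
        _ = 2 * (n+1).factorial := by rw [Nat.factorial_succ]

lemma aux_sum_inv (r : ℕ) :
    ∑ i ∈ Finset.range (r+1), ((Nat.factorial i : ℝ) * (Nat.factorial (r-i) : ℝ))⁻¹ ≤ 2 := by
  have key : ∀ i ∈ Finset.range (r+1),
      ((Nat.factorial i : ℝ) * (Nat.factorial (r-i) : ℝ))⁻¹
        = (r.choose i : ℝ) / (Nat.factorial r : ℝ) := by
    intro i hi
    simp only [mem_range] at hi
    have h := Nat.choose_mul_factorial_mul_factorial (Nat.lt_succ_iff.mp hi) 
    have h' : ((r.choose i : ℝ)) * ((Nat.factorial i : ℝ) * (Nat.factorial (r-i) : ℝ))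
        = (Nat.factorial r : ℝ) := by
      rw [← mul_assoc]; exact_mod_cast congrArg (Nat.cast : ℕ → ℝ) h
    have hf : (Nat.factorial i : ℝ) * (Nat.factorial (r-i) : ℝ) ≠ 0 := by positivity
    have hr : (Nat.factorial r : ℝ) ≠ 0 := by positivity
    field_simp
    linarith [h']
  rw [Finset.sum_congr rfl key, ← Finset.sum_div, ← Nat.cast_sum, Nat.sum_range_choose]
  rw [div_le_iff₀ (by positivity)]
  calc ((2^r : ℕ) : ℝ) ≤ ((2 * Nat.factorial r : ℕ) : ℝ) := by exact_mod_cast aux_two_pow r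
    _ = 2 * (Nat.factorial r : ℝ) := by push_cast; ring

/-- Let p : ℝ → ℝ be a polynomial of degree at most r with p(0) = 0 and |p(i)| ≤ 2
for all integers i = 1, …, N, where r ≤ N. Then for every real ℓ ≥ N, |p(ℓ)| ≤ 4 ℓ^r. -/
theorem stmt1 (r N : ℕ) (hrN : r ≤ N) (p : Polynomial ℝ)
    (hdeg : p.natDegree ≤ r) (h0 : p.eval 0 = 0)
    (hb : ∀ i : ℕ, 1 ≤ i → i ≤ N → |p.eval (i : ℝ)| ≤ 2)
    (ℓ : ℝ) (hℓ : (N : ℝ) ≤ ℓ) :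
    |p.eval ℓ| ≤ 4 * ℓ ^ r := by
  have hℓ0 : (0:ℝ) ≤ ℓ := le_trans (Nat.cast_nonneg N) hℓ
  have hℓr : (r:ℝ) ≤ ℓ := le_trans (by exact_mod_cast hrN) hℓ
  set v : ℕ → ℝ := fun i => (i : ℝ) with hv
  have hinj : Set.InjOn v (Finset.range (r+1)) :=
    fun a _ b _ h => Nat.cast_injective h
  have hdlt : p.degree < (Finset.range (r+1)).card := by
    rw [Finset.card_range]
    calc p.degree ≤ (p.natDegree : WithBot ℕ) := Polynomial.degree_le_natDegree
      _ < ((r+1 : ℕ) : WithBot ℕ) := by exact_mod_cast Nat.lt_succ_iff.mpr hdeg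
  have hp := Lagrange.eq_interpolate hinj hdlt
  have heval : p.eval ℓ = ∑ i ∈ Finset.range (r+1),
      p.eval (i:ℝ) * Polynomial.eval ℓ (Lagrange.basis (Finset.range (r+1)) v i) := by
    conv_lhs => rw [hp]
    rw [Lagrange.interpolate_apply, Polynomial.eval_finset_sum]
    exact Finset.sum_congr rfl fun i _ => by rw [Polynomial.eval_mul, Polynomial.eval_C]
  -- bound each basis evaluation
  have hbasis : ∀ i ∈ Finset.range (r+1),
      |Polynomial.eval ℓ (Lagrange.basis (Finset.range (r+1)) v i)| ≤
        ((Nat.factorial i : ℝ) * (Nat.factorial (r-i) : ℝ))⁻¹ * ℓ ^ r := by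
    intro i hi
    have hir : i ≤ r := Nat.lt_succ_iff.mp (Finset.mem_range.mp hi)
    rw [Lagrange.basis, Polynomial.eval_prod, Finset.abs_prod]
    have hterm : ∀ j ∈ (Finset.range (r+1)).erase i,
        |Polynomial.eval ℓ (Lagrange.basisDivisor (v i) (v j))|
          = |(i:ℝ) - j|⁻¹ * |ℓ - j| := by
      intro j hj
      rw [Lagrange.basisDivisor, Polynomial.eval_mul, Polynomial.eval_C,
        Polynomial.eval_sub, Polynomial.eval_X, Polynomial.eval_C, abs_mul, abs_inv]
    rw [Finset.prod_congr rfl hterm, Finset.prod_mul_distrib, Finset.prod_inv_distrib,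
      aux_prod_fact r i hir]
    have h2 : ∏ j ∈ (Finset.range (r+1)).erase i, |ℓ - (j:ℝ)| ≤ ℓ ^ r := by
      have hcard : ((Finset.range (r+1)).erase i).card = r := by
        rw [Finset.card_erase_of_mem hi, Finset.card_range]; omega
      calc ∏ j ∈ (Finset.range (r+1)).erase i, |ℓ - (j:ℝ)|
          ≤ ∏ _j ∈ (Finset.range (r+1)).erase i, ℓ := by
            apply Finset.prod_le_prod (fun j _ => abs_nonneg _)
            intro j hj
            have hjr : (j:ℝ) ≤ r := by
              have := Finset.mem_range.mp (Finset.mem_of_mem_erase hj)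
              exact_mod_cast Nat.lt_succ_iff.mp this
            rw [abs_of_nonneg (by linarith)]
            have : (0:ℝ) ≤ (j:ℝ) := Nat.cast_nonneg j
            linarith
        _ = ℓ ^ r := by rw [Finset.prod_const, hcard]
    have h3 : (0:ℝ) ≤ ((Nat.factorial i : ℝ) * (Nat.factorial (r-i) : ℝ))⁻¹ := by positivity
    exact mul_le_mul_of_nonneg_left h2 h3
  have hval : ∀ i ∈ Finset.range (r+1), |p.eval (i:ℝ)| ≤ 2 := by
    intro i hi
    rcases Nat.eq_zero_or_pos i with h | h
    · subst h; simp [h0]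
    · exact hb i h (le_trans (Nat.lt_succ_iff.mp (Finset.mem_range.mp hi)) hrN)
  calc |p.eval ℓ| ≤ ∑ i ∈ Finset.range (r+1),
        |p.eval (i:ℝ) * Polynomial.eval ℓ (Lagrange.basis (Finset.range (r+1)) v i)| := by
        rw [heval]; exact Finset.abs_sum_le_sum_abs _ _
    _ ≤ ∑ i ∈ Finset.range (r+1),
        2 * (((Nat.factorial i : ℝ) * (Nat.factorial (r-i) : ℝ))⁻¹ * ℓ ^ r) := by
        apply Finset.sum_le_sum
        intro i hi
        rw [abs_mul]
        exact mul_le_mul (hval i hi) (hbasis i hi) (abs_nonneg _) (by norm_num)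
    _ = (∑ i ∈ Finset.range (r+1), ((Nat.factorial i : ℝ) * (Nat.factorial (r-i) : ℝ))⁻¹)
          * (2 * ℓ ^ r) := by
        rw [Finset.sum_mul]; exact Finset.sum_congr rfl fun i _ => by ring
    _ ≤ 2 * (2 * ℓ ^ r) := by
        apply mul_le_mul_of_nonneg_right (aux_sum_inv r) (by positivity)
    _ = 4 * ℓ ^ r := by ring
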